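/- For every n with 1 ≤ n < ω, every infinite X ⊆ ℝⁿ has a subset Y ⊆ X with |Y| = |X| such that Y is independent for the algebraic 4-hypergraph on ℝⁿ defined by the polynomial p_n(x,y,z,w)·q_n(x,y,z), where p_n(x,y,z,w) = ‖x − y‖² − ‖z − w‖² and q_n(x,y,z) = ‖x − y‖² − ‖z − y‖². -/

import Mathlib

/-- The edge set of the algebraic `k`-hypergraph on `ℝⁿ` defined by a `(k × n)`-ary
polynomial `p`: its edges are the `k`-element subsets `{a₀, …, a_{k-1}}` of `ℝⁿ` admitting
an enumeration with `p(a₀, …, a_{k-1}) = 0`. -/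
def algEdges (n k : ℕ) (p : MvPolynomial (Fin k × Fin n) ℝ) : Set (Set (Fin n → ℝ)) :=
  {s | ∃ a : Fin k → (Fin n → ℝ), Function.Injective a ∧ s = Set.range a ∧
      MvPolynomial.eval (fun q => a q.1 q.2) p = 0}

/-- `(ℝⁿ, E)` is an algebraic `k`-hypergraph: `2 ≤ k` and `E` is defined by some
`(k × n)`-ary polynomial. -/
def IsAlgebraicHypergraph (n k : ℕ) (E : Set (Set (Fin n → ℝ))) : Prop :=
  2 ≤ k ∧ ∃ p : MvPolynomial (Fin k × Fin n) ℝ, E = algEdges n k p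

/-- `X` is complete for a `k`-hypergraph with edge set `E`: every `k`-element subset of `X`
is an edge. -/
def IsCompleteIn {V : Type} (E : Set (Set V)) (k : ℕ) (X : Set V) : Prop :=
  ∀ s : Set V, s ⊆ X → s.Finite → s.ncard = k → s ∈ E

/-- `X` is independent for a `k`-hypergraph with edge set `E`: no `k`-element subset of `X`
is an edge. -/
def IsIndependentIn {V : Type} (E : Set (Set V)) (k : ℕ) (X : Set V) : Prop :=
  ∀ s : Set V, s ⊆ X → s.Finite → s.ncard = k → s ∉ E

/-- The `(4 × n)`-ary polynomial `pₙ(x,y,z,w) · qₙ(x,y,z)` where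
`pₙ(x,y,z,w) = ‖x − y‖² − ‖z − w‖²` and `qₙ(x,y,z) = ‖x − y‖² − ‖z − y‖²`,
with blocks `x = x₀, y = x₁, z = x₂, w = x₃`. -/
noncomputable def erdosPoly (n : ℕ) : MvPolynomial (Fin 4 × Fin n) ℝ :=
  ((∑ i : Fin n, (MvPolynomial.X (0, i) - MvPolynomial.X (1, i)) ^ 2) -
    (∑ i : Fin n, (MvPolynomial.X (2, i) - MvPolynomial.X (3, i)) ^ 2)) *
  ((∑ i : Fin n, (MvPolynomial.X (0, i) - MvPolynomial.X (1, i)) ^ 2) -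
    (∑ i : Fin n, (MvPolynomial.X (2, i) - MvPolynomial.X (1, i)) ^ 2))

open Cardinal

namespace Stmt14

variable {n : ℕ}

noncomputable def D (x y : Fin n → ℝ) : ℝ := ∑ i, (x i - y i)^2

lemma erdos_eval (a : Fin 4 → (Fin n → ℝ)) :
    MvPolynomial.eval (fun q => a q.1 q.2) (erdosPoly n) =
      (D (a 0) (a 1) - D (a 2) (a 3)) * (D (a 0) (a 1) - D (a 2) (a 1)) := by
  simp [erdosPoly, D]

def DInj (Y : Set (Fin n → ℝ)) : Prop :=
  ∀ ⦃a⦄, a ∈ Y → ∀ ⦃b⦄, b ∈ Y → ∀ ⦃c⦄, c ∈ Y → ∀ ⦃d⦄, d ∈ Y →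
    a ≠ b → c ≠ d → D a b = D c d → ({a, b} : Set (Fin n → ℝ)) = {c, d}

lemma dinj_indep {Y : Set (Fin n → ℝ)} (hY : DInj Y) :
    IsIndependentIn (algEdges n 4 (erdosPoly n)) 4 Y := by
  intro s hsY _ _ hmem
  obtain ⟨a, hinj, hs, hev⟩ := hmem
  rw [erdos_eval] at hev
  have haY : ∀ i, a i ∈ Y := fun i => hsY (hs ▸ Set.mem_range_self i)
  have hne : ∀ i j : Fin 4, i ≠ j → a i ≠ a j := fun i j hij h => hij (hinj h)
  rcases mul_eq_zero.1 hev with h | h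
  · have := hY (haY 0) (haY 1) (haY 2) (haY 3)
      (hne 0 1 (by decide)) (hne 2 3 (by decide)) (by linarith)
    have h0 : a 0 ∈ ({a 2, a 3} : Set (Fin n → ℝ)) := this ▸ (by simp)
    rcases h0 with h0 | h0
    · exact hne 0 2 (by decide) h0
    · exact hne 0 3 (by decide) h0
  · have := hY (haY 0) (haY 1) (haY 2) (haY 1)
      (hne 0 1 (by decide)) (hne 2 1 (by decide)) (by linarith)
    have h0 : a 0 ∈ ({a 2, a 1} : Set (Fin n → ℝ)) := this ▸ (by simp)
    rcases h0 with h0 | h0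
    · exact hne 0 2 (by decide) h0
    · exact hne 0 1 (by decide) h0

variable {n : ℕ}



lemma D_symm (x y : Fin n → ℝ) : D x y = D y x := by
  unfold D; congr 1; funext i; ring

lemma D_self (x : Fin n → ℝ) : D x x = 0 := by simp [D]

lemma D_eq_zero_iff {x y : Fin n → ℝ} : D x y = 0 ↔ x = y := by
  constructor
  · intro h
    funext i
    have h1 : ∀ j ∈ Finset.univ, (0:ℝ) ≤ (x j - y j)^2 := fun j _ => sq_nonneg _
    have := (Finset.sum_eq_zero_iff_of_nonneg h1).1 h i (Finset.mem_univ i)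
    have := sq_eq_zero_iff.1 this
    linarith
  · rintro rfl; exact D_self x

lemma D_ne_zero {x y : Fin n → ℝ} (h : x ≠ y) : D x y ≠ 0 :=
  fun hc => h (D_eq_zero_iff.1 hc)

/-! ### The space of admissible quadratic functionals -/

abbrev Qsp (n : ℕ) := ℝ × (Fin n → ℝ) × ℝ

noncomputable def qev (q : Qsp n) (x : Fin n → ℝ) : ℝ :=
  q.1 * (∑ i, x i ^ 2) + (∑ i, q.2.1 i * x i) + q.2.2

lemma qev_add (q q' : Qsp n) (x : Fin n → ℝ) : qev (q + q') x = qev q x + qev q' x := by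
  simp [qev, add_mul, Finset.sum_add_distrib]; ring

lemma qev_smul (c : ℝ) (q : Qsp n) (x : Fin n → ℝ) : qev (c • q) x = c * qev q x := by
  simp [qev, Finset.mul_sum, mul_add, smul_eq_mul]; ring

lemma qev_zero (x : Fin n → ℝ) : qev (0 : Qsp n) x = 0 := by simp [qev]

lemma qev_sub (q q' : Qsp n) (x : Fin n → ℝ) : qev (q - q') x = qev q x - qev q' x := by
  have : q - q' = q + (-1 : ℝ) • q' := by module
  rw [this, qev_add, qev_smul]; ring

noncomputable def Phi (u : Fin n → ℝ) : Qsp n := (1, fun i => -2 * u i, ∑ i, u i ^ 2)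

noncomputable def e3 : Qsp n := (0, 0, 1)

lemma qev_Phi (u x : Fin n → ℝ) : qev (Phi u) x = D x u := by
  simp [qev, Phi, D, sub_sq, Finset.sum_add_distrib, Finset.sum_sub_distrib]
  ring_nf
  simp [Finset.mul_sum]
  congr 1
  funext i
  ring

lemma qev_e3 (x : Fin n → ℝ) : qev (e3 : Qsp n) x = 1 := by simp [qev, e3]

/-- the sphere functional around `u` of "radius" `v`. -/
lemma qev_sphere (u x : Fin n → ℝ) (v : ℝ) :
    qev (Phi u - v • e3) x = D x u - v := by
  rw [qev_sub, qev_Phi, qev_smul, qev_e3]; ring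

lemma qev_bis (u u' x : Fin n → ℝ) :
    qev (Phi u - Phi u') x = D x u - D x u' := by
  rw [qev_sub, qev_Phi, qev_Phi]

def Zset (q : Qsp n) : Set (Fin n → ℝ) := {x | qev q x = 0}

def ZU (U : Submodule ℝ (Qsp n)) : Set (Fin n → ℝ) := {x | ∀ q ∈ U, qev q x = 0}

def Wsp (S : Set (Fin n → ℝ)) : Submodule ℝ (Qsp n) where
  carrier := {q | ∀ x ∈ S, qev q x = 0}
  add_mem' := fun ha hb x hx => by rw [qev_add, ha x hx, hb x hx, add_zero]
  zero_mem' := fun x hx => qev_zero x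
  smul_mem' := fun c q hq x hx => by rw [qev_smul, hq x hx, mul_zero]

lemma mem_Wsp {S : Set (Fin n → ℝ)} {q : Qsp n} : q ∈ Wsp S ↔ ∀ x ∈ S, qev q x = 0 :=
  Iff.rfl

/-! ### Pools -/

/-- A `lam`-pool: a set of size `lam` such that every admissible quadratic set which does not
contain it meets it in fewer than `lam` points. -/
def IsPool (lam : Cardinal) (C : Set (Fin n → ℝ)) : Prop :=
  Cardinal.mk C = lam ∧ ∀ q : Qsp n, (∃ x ∈ C, qev q x ≠ 0) → #(↥(C ∩ Zset q)) < lam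

lemma exists_pool (A : Set (Fin n → ℝ)) (lam : Cardinal) (hlam : lam ≤ #A) :
    ∃ C ⊆ A, IsPool lam C := by
  classical
  -- the set of achievable dimensions
  set P : Submodule ℝ (Qsp n) → Prop := fun U => lam ≤ #(↥(A ∩ ZU U)) with hP
  have hbot : P ⊥ := by
    have : ZU (⊥ : Submodule ℝ (Qsp n)) = Set.univ := by
      ext x; simp only [ZU, Set.mem_setOf_eq, Set.mem_univ, iff_true]
      intro q hq; rw [(Submodule.mem_bot ℝ).1 hq]; exact qev_zero x
    rw [hP]; simp only [this, Set.inter_univ]; exact hlam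
  set dset : Set ℕ := {d | ∃ U, P U ∧ Module.finrank ℝ (↥U) = d} with hdset
  have hne : dset.Nonempty := ⟨_, ⊥, hbot, rfl⟩
  have hbdd : BddAbove dset := by
    refine ⟨Module.finrank ℝ (Qsp n), ?_⟩
    rintro d ⟨U, _, rfl⟩
    exact Submodule.finrank_le U
  have hmem : sSup dset ∈ dset := Nat.sSup_mem hne hbdd
  obtain ⟨U, hU, hrank⟩ := hmem
  have key : ∀ q : Qsp n, (∃ x ∈ A ∩ ZU U, qev q x ≠ 0) →
      #(↥((A ∩ ZU U) ∩ Zset q)) < lam := by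
    intro q ⟨x₀, hx₀, hqx₀⟩
    have hqU : q ∉ U := fun h => hqx₀ (hx₀.2 q h)
    set U' : Submodule ℝ (Qsp n) := U ⊔ Submodule.span ℝ {q} with hU'
    have hZU' : (A ∩ ZU U) ∩ Zset q = A ∩ ZU U' := by
      ext x
      simp only [Set.mem_inter_iff, ZU, Zset, Set.mem_setOf_eq]
      constructor
      · rintro ⟨⟨hA, hu⟩, hq⟩
        refine ⟨hA, fun p hp => ?_⟩
        rw [hU', Submodule.mem_sup] at hp
        obtain ⟨u, hu', v, hv, rfl⟩ := hp
        obtain ⟨c, rfl⟩ := Submodule.mem_span_singleton.1 hv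
        rw [qev_add, qev_smul, hu u hu', hq, mul_zero, add_zero]
      · rintro ⟨hA, hu⟩
        exact ⟨⟨hA, fun p hp => hu p (le_sup_left (α := Submodule ℝ (Qsp n)) hp)⟩,
          hu q (le_sup_right (α := Submodule ℝ (Qsp n)) (Submodule.mem_span_singleton_self q))⟩
    by_contra hcon
    push_neg at hcon
    have hPU' : P U' := by rw [hP]; rw [hZU'] at hcon; exact hcon
    have hlt : U < U' := by
      refine lt_of_le_of_ne le_sup_left (fun h => hqU ?_)
      rw [h]; exact le_sup_right (α := Submodule ℝ (Qsp n)) (Submodule.mem_span_singleton_self q)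
    have : Module.finrank ℝ (↥U) < Module.finrank ℝ (↥U') :=
      Submodule.finrank_lt_finrank_of_lt hlt
    have hle : Module.finrank ℝ (↥U') ≤ sSup dset := le_csSup hbdd ⟨U', hPU', rfl⟩
    omega
  obtain ⟨C', hC'sub, hC'card⟩ := Cardinal.le_mk_iff_exists_subset.1 hU
  refine ⟨C', hC'sub.trans Set.inter_subset_left, hC'card, ?_⟩
  rintro q ⟨x, hx, hxq⟩
  exact lt_of_le_of_lt
    (mk_le_mk_of_subset (Set.inter_subset_inter hC'sub (subset_refl _)))
    (key q ⟨x, hC'sub hx, hxq⟩)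



/-! ### cardinal helpers -/

lemma union_small {α : Type} {lam : Cardinal} (hreg : lam.IsRegular) {ι : Type} (f : ι → Set α)
    (hι : #ι < lam) (h : ∀ i, #(f i) < lam) : #(⋃ i, f i) < lam :=
  lt_of_le_of_lt (Cardinal.mk_iUnion_le f)
    (Cardinal.mul_lt_of_lt hreg.aleph0_le hι (Cardinal.iSup_lt_of_isRegular hreg hι h))

lemma exists_mem_not_mem {α : Type} {A B : Set α} (h : #B < #A) : ∃ x ∈ A, x ∉ B := by
  by_contra hc
  push_neg at hc
  exact absurd (mk_le_mk_of_subset hc) (not_le.2 h)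

/-! ### DInj lemmas -/

lemma dInj_mono {Y Z : Set (Fin n → ℝ)} (h : DInj Y) (hZ : Z ⊆ Y) : DInj Z :=
  fun _ ha _ hb _ hc _ hd => h (hZ ha) (hZ hb) (hZ hc) (hZ hd)

lemma dInj_insert {Y : Set (Fin n → ℝ)} (h : DInj Y) {z : Fin n → ℝ}
    (h1 : ∀ u ∈ Y, ∀ a ∈ Y, ∀ b ∈ Y, a ≠ b → D z u ≠ D a b)
    (h2 : ∀ a ∈ Y, ∀ b ∈ Y, a ≠ b → D z a ≠ D z b) :
    DInj (insert z Y) := by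
  intro a ha b hb c hc d hd hab hcd heq
  rcases Set.mem_insert_iff.1 ha with hea | ha
  · rcases Set.mem_insert_iff.1 hb with heb | hb
    · exact absurd (hea.trans heb.symm) hab
    rcases Set.mem_insert_iff.1 hc with hec | hc
    · rcases Set.mem_insert_iff.1 hd with hed | hd
      · exact absurd (hec.trans hed.symm) hcd
      rw [hea, hec] at heq ⊢
      by_cases hbd : b = d
      · rw [hbd]
      · exact absurd heq (h2 b hb d hd hbd)
    rcases Set.mem_insert_iff.1 hd with hed | hd
    · rw [hea, hed] at heq ⊢
      rw [D_symm c z] at heq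
      by_cases hbc : b = c
      · rw [hbc, Set.pair_comm]
      · exact absurd heq (h2 b hb c hc hbc)
    · rw [hea] at heq
      exact absurd heq (h1 b hb c hc d hd hcd)
  rcases Set.mem_insert_iff.1 hb with heb | hb
  · rcases Set.mem_insert_iff.1 hc with hec | hc
    · rcases Set.mem_insert_iff.1 hd with hed | hd
      · exact absurd (hec.trans hed.symm) hcd
      rw [heb, hec] at heq ⊢
      rw [D_symm a z] at heq
      by_cases had : a = d
      · rw [had, Set.pair_comm]
      · exact absurd heq (h2 a ha d hd had)
    rcases Set.mem_insert_iff.1 hd with hed | hd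
    · rw [heb, hed] at heq ⊢
      rw [D_symm a z, D_symm c z] at heq
      by_cases hac : a = c
      · rw [hac]
      · exact absurd heq (h2 a ha c hc hac)
    · rw [heb] at heq
      rw [D_symm a z] at heq
      exact absurd heq (h1 a ha c hc d hd hcd)
  rcases Set.mem_insert_iff.1 hc with hec | hc
  · rcases Set.mem_insert_iff.1 hd with hed | hd
    · exact absurd (hec.trans hed.symm) hcd
    · rw [hec] at heq
      exact absurd heq.symm (h1 d hd a ha b hb hab)
  rcases Set.mem_insert_iff.1 hd with hed | hd
  · rw [hed, D_symm c z] at heq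
    exact absurd heq.symm (h1 c hc a ha b hb hab)
  · exact h ha hb hc hd hab hcd heq

lemma dInj_sUnion {c : Set (Set (Fin n → ℝ))} (hc : IsChain (· ⊆ ·) c)
    (h : ∀ Y ∈ c, DInj Y) : DInj (⋃₀ c) := by
  have hdir := hc.directedOn
  intro a ha b hb x hx y hy hab hxy heq
  obtain ⟨Ya, hYa, ha⟩ := ha
  obtain ⟨Yb, hYb, hb⟩ := hb
  obtain ⟨Yx, hYx, hx⟩ := hx
  obtain ⟨Yy, hYy, hy⟩ := hy
  obtain ⟨Y1, hY1, hab1, hab2⟩ := hdir _ hYa _ hYb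
  obtain ⟨Y2, hY2, hxy1, hxy2⟩ := hdir _ hYx _ hYy
  obtain ⟨Y3, hY3, h31, h32⟩ := hdir _ hY1 _ hY2
  exact h Y3 hY3 (h31 (hab1 ha)) (h31 (hab2 hb)) (h32 (hxy1 hx)) (h32 (hxy2 hy)) hab hxy heq

lemma dInj_iUnion_mono {ι : Type} [LinearOrder ι] (A : ι → Set (Fin n → ℝ))
    (hmono : Monotone A) (h : ∀ i, DInj (A i)) : DInj (⋃ i, A i) := by
  intro a ha b hb x hx y hy hab hxy heq
  obtain ⟨_, ⟨ia, rfl⟩, ha⟩ := ha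
  obtain ⟨_, ⟨ib, rfl⟩, hb⟩ := hb
  obtain ⟨_, ⟨ix, rfl⟩, hx⟩ := hx
  obtain ⟨_, ⟨iy, rfl⟩, hy⟩ := hy
  set m := max (max ia ib) (max ix iy) with hm
  refine h m (hmono ?_ ha) (hmono ?_ hb) (hmono ?_ hx) (hmono ?_ hy) hab hxy heq
  · exact le_max_of_le_left (le_max_left _ _)
  · exact le_max_of_le_left (le_max_right _ _)
  · exact le_max_of_le_right (le_max_left _ _)
  · exact le_max_of_le_right (le_max_right _ _)

lemma dInj_empty : DInj (∅ : Set (Fin n → ℝ)) := by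
  intro a ha; exact absurd ha (Set.notMem_empty a)


/-! ### Compatibility predicates and the one-block extension lemma -/

def Compat (C : Set (Fin n → ℝ)) (p : Fin n → ℝ) : Prop :=
  ∃ x ∈ C, ∃ x' ∈ C, D x p ≠ D x' p

def Compat2 (C : Set (Fin n → ℝ)) (p p' : Fin n → ℝ) : Prop :=
  ∃ x ∈ C, D x p ≠ D x p'

lemma compat2_symm {C : Set (Fin n → ℝ)} {p p' : Fin n → ℝ} (h : Compat2 C p p') :
    Compat2 C p' p := by
  obtain ⟨x, hx, hne⟩ := h; exact ⟨x, hx, hne.symm⟩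

def Straddle (A B : Set (Fin n → ℝ)) : Prop :=
  ∃ u ∈ A, ∃ u' ∈ A, ∃ x ∈ B, D x u ≠ D x u'

lemma pool_small_sphere {lam : Cardinal} {C : Set (Fin n → ℝ)} (hC : IsPool lam C)
    (u : Fin n → ℝ) (v : ℝ) (hw : ∃ x ∈ C, D x u ≠ v) : #{y ∈ C | D y u = v} < lam := by
  obtain ⟨x, hx, hxv⟩ := hw
  have hset : {y ∈ C | D y u = v} = C ∩ Zset (Phi u - v • e3) := by
    ext y
    simp only [Set.mem_setOf_eq, Set.mem_inter_iff, Zset, qev_sphere, sub_eq_zero]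
  rw [hset]
  exact hC.2 _ ⟨x, hx, by rw [qev_sphere]; exact sub_ne_zero.2 hxv⟩

lemma pool_small_bis {lam : Cardinal} {C : Set (Fin n → ℝ)} (hC : IsPool lam C)
    (u u' : Fin n → ℝ) (hw : ∃ x ∈ C, D x u ≠ D x u') :
    #{y ∈ C | D y u = D y u'} < lam := by
  obtain ⟨x, hx, hxv⟩ := hw
  have hset : {y ∈ C | D y u = D y u'} = C ∩ Zset (Phi u - Phi u') := by
    ext y
    simp only [Set.mem_setOf_eq, Set.mem_inter_iff, Zset, qev_bis, sub_eq_zero]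
  rw [hset]
  exact hC.2 _ ⟨x, hx, by rw [qev_bis]; exact sub_ne_zero.2 hxv⟩

lemma TWP {lam : Cardinal} (hreg : lam.IsRegular) {C : Set (Fin n → ℝ)} (hC : IsPool lam C)
    {P : Set (Fin n → ℝ)} (hP : #P < lam) (hPD : DInj P)
    (hPc : ∀ p ∈ P, Compat C p)
    (hPc2 : ∀ p ∈ P, ∀ p' ∈ P, p ≠ p' → Compat2 C p p')
    {Fut : Set (Set (Fin n → ℝ))} (hFut : #Fut < lam)
    (hF1 : ∀ B ∈ Fut, Straddle B C) (hF2 : ∀ B ∈ Fut, Straddle C B) :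
    ∃ Z ⊆ C \ P, #Z = lam ∧ DInj (P ∪ Z) ∧
      (∀ z ∈ Z, ∀ B ∈ Fut, Compat B z) ∧
      (∀ z ∈ Z, ∀ B ∈ Fut, ∀ u ∈ P ∪ Z, u ≠ z → Compat2 B z u) := by
  classical
  have hlaminf : ℵ₀ ≤ lam := hreg.aleph0_le
  have hCcard : #C = lam := hC.1
  set Good : Set (Fin n → ℝ) → Prop := fun Z =>
    Z ⊆ C \ P ∧ DInj (P ∪ Z) ∧
      (∀ z ∈ Z, ∀ B ∈ Fut, Compat B z) ∧
      (∀ z ∈ Z, ∀ B ∈ Fut, ∀ u ∈ P ∪ Z, u ≠ z → Compat2 B z u) with hGoodDef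
  have hGoodEmpty : Good ∅ := by
    refine ⟨Set.empty_subset _, by simpa using hPD, by simp, by simp⟩
  -- Step 1: every small good set extends by one point of the pool
  have step : ∀ Z, Good Z → #Z < lam → ∃ z ∈ C, z ∉ P ∪ Z ∧ Good (insert z Z) := by
    intro Z hZgood hZcard
    obtain ⟨hZsub, hZD, hZF1, hZF2⟩ := hZgood
    set T : Set (Fin n → ℝ) := P ∪ Z with hT
    have hTlam : #T < lam :=
      lt_of_le_of_lt (mk_union_le P Z) (Cardinal.add_lt_of_lt hlaminf hP hZcard)
    have hZC : Z ⊆ C := fun z hz => (hZsub hz).1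
    have hCtwo : ∀ u : Fin n → ℝ, ∃ x ∈ C, x ≠ u := by
      intro u
      have h1 : #({u} : Set (Fin n → ℝ)) < #C := by
        rw [hCcard, Cardinal.mk_singleton]
        exact lt_of_lt_of_le Cardinal.one_lt_aleph0 hlaminf
      obtain ⟨x, hx, hxu⟩ := exists_mem_not_mem h1
      exact ⟨x, hx, fun h => hxu (by rw [h]; exact rfl)⟩
    -- the four families of forbidden sets
    set f1 : ↥T × ↥T × ↥T → Set (Fin n → ℝ) := fun w =>
      {y ∈ C | (w.2.1 : Fin n → ℝ) ≠ (w.2.2 : Fin n → ℝ) ∧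
        D y (w.1 : Fin n → ℝ) = D (w.2.1 : Fin n → ℝ) (w.2.2 : Fin n → ℝ)}
      with hf1def
    set f2 : ↥T × ↥T → Set (Fin n → ℝ) := fun w =>
      {y ∈ C | (w.1 : Fin n → ℝ) ≠ (w.2 : Fin n → ℝ) ∧
        D y (w.1 : Fin n → ℝ) = D y (w.2 : Fin n → ℝ)} with hf2def
    set f3 : ↥Fut → Set (Fin n → ℝ) := fun B =>
      {y ∈ C | ∀ x ∈ (B : Set (Fin n → ℝ)), ∀ x' ∈ (B : Set (Fin n → ℝ)), D x y = D x' y}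
      with hf3def
    set f4 : ↥Fut × ↥T → Set (Fin n → ℝ) := fun w =>
      {y ∈ C | ∀ x ∈ (w.1 : Set (Fin n → ℝ)), D x y = D x (w.2 : Fin n → ℝ)} with hf4def
    have hsmall1 : ∀ w, #(f1 w) < lam := by
      rintro ⟨⟨u, hu⟩, ⟨a, ha⟩, ⟨b, hb⟩⟩
      by_cases hab : a = b
      · have : f1 ⟨⟨u, hu⟩, ⟨a, ha⟩, ⟨b, hb⟩⟩ = ∅ := by
          ext y; simp [hf1def, hab]
        rw [this]
        simpa using lt_of_lt_of_le Cardinal.aleph0_pos hlaminf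
      · have heq : f1 ⟨⟨u, hu⟩, ⟨a, ha⟩, ⟨b, hb⟩⟩ = {y ∈ C | D y u = D a b} := by
          ext y; simp [hf1def, hab]
        rw [heq]
        refine pool_small_sphere hC u (D a b) ?_
        rcases hu with hu | hu
        · obtain ⟨x, hx, x', hx', hne⟩ := hPc u hu
          by_cases h : D x u = D a b
          · exact ⟨x', hx', fun h' => hne (h.trans h'.symm)⟩
          · exact ⟨x, hx, h⟩
        · exact ⟨u, hZC hu, by rw [D_self]; exact fun h => (D_ne_zero hab) h.symm⟩
    have hsmall2 : ∀ w, #(f2 w) < lam := by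
      rintro ⟨⟨a, ha⟩, ⟨b, hb⟩⟩
      by_cases hab : a = b
      · have : f2 ⟨⟨a, ha⟩, ⟨b, hb⟩⟩ = ∅ := by ext y; simp [hf2def, hab]
        rw [this]
        simpa using lt_of_lt_of_le Cardinal.aleph0_pos hlaminf
      · have heq : f2 ⟨⟨a, ha⟩, ⟨b, hb⟩⟩ = {y ∈ C | D y a = D y b} := by
          ext y; simp [hf2def, hab]
        rw [heq]
        refine pool_small_bis hC a b ?_
        rcases ha with ha | ha
        · rcases hb with hb | hb
          · exact hPc2 a ha b hb hab
          · refine ⟨b, hZC hb, ?_⟩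
            rw [D_self]
            exact fun h => (D_ne_zero (fun h' => hab h'.symm)) h
        · refine ⟨a, hZC ha, ?_⟩
          rw [D_self]
          exact fun h => (D_ne_zero hab) h.symm
    have hsmall3 : ∀ w, #(f3 w) < lam := by
      rintro ⟨B, hB⟩
      obtain ⟨u, hu, u', hu', x₀, hx₀, hne⟩ := hF1 B hB
      have hsub : f3 ⟨B, hB⟩ ⊆ {y ∈ C | D y u = D y u'} := by
        rintro y ⟨hyC, hall⟩
        refine ⟨hyC, ?_⟩
        rw [D_symm y u, D_symm y u']
        exact hall u hu u' hu'
      exact lt_of_le_of_lt (mk_le_mk_of_subset hsub)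
        (pool_small_bis hC u u' ⟨x₀, hx₀, hne⟩)
    have hsmall4 : ∀ w, #(f4 w) < lam := by
      rintro ⟨⟨B, hB⟩, ⟨u, hu⟩⟩
      obtain ⟨y₁, hy₁, y₂, hy₂, x₀, hx₀, hne⟩ := hF2 B hB
      have hw : ∃ w ∈ C, D w x₀ ≠ D x₀ u := by
        by_cases h : D x₀ y₁ = D x₀ u
        · refine ⟨y₂, hy₂, ?_⟩
          rw [D_symm]
          intro h'
          exact hne (h.trans h'.symm)
        · exact ⟨y₁, hy₁, by rw [D_symm]; exact h⟩
      have hsub : f4 ⟨⟨B, hB⟩, ⟨u, hu⟩⟩ ⊆ {y ∈ C | D y x₀ = D x₀ u} := by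
        rintro y ⟨hyC, hall⟩
        exact ⟨hyC, by rw [D_symm]; exact hall x₀ hx₀⟩
      exact lt_of_le_of_lt (mk_le_mk_of_subset hsub)
        (pool_small_sphere hC x₀ (D x₀ u) hw)
    -- index cardinalities
    have hidx1 : #(↥T × ↥T × ↥T) < lam := by
      have : #(↥T × ↥T × ↥T) = #↥T * (#↥T * #↥T) := by
        simp [Cardinal.mk_prod]
      rw [this]
      exact Cardinal.mul_lt_of_lt hlaminf hTlam
        (Cardinal.mul_lt_of_lt hlaminf hTlam hTlam)
    have hidx2 : #(↥T × ↥T) < lam := by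
      have : #(↥T × ↥T) = #↥T * #↥T := by simp [Cardinal.mk_prod]
      rw [this]
      exact Cardinal.mul_lt_of_lt hlaminf hTlam hTlam
    have hidx4 : #(↥Fut × ↥T) < lam := by
      have : #(↥Fut × ↥T) = #↥Fut * #↥T := by simp [Cardinal.mk_prod]
      rw [this]
      exact Cardinal.mul_lt_of_lt hlaminf hFut hTlam
    set bad : Set (Fin n → ℝ) :=
      T ∪ ((⋃ w, f1 w) ∪ ((⋃ w, f2 w) ∪ ((⋃ w, f3 w) ∪ (⋃ w, f4 w)))) with hbaddef
    have hbadlam : #bad < lam := by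
      refine lt_of_le_of_lt (mk_union_le _ _) (Cardinal.add_lt_of_lt hlaminf hTlam ?_)
      refine lt_of_le_of_lt (mk_union_le _ _) (Cardinal.add_lt_of_lt hlaminf
        (union_small hreg f1 hidx1 hsmall1) ?_)
      refine lt_of_le_of_lt (mk_union_le _ _) (Cardinal.add_lt_of_lt hlaminf
        (union_small hreg f2 hidx2 hsmall2) ?_)
      exact lt_of_le_of_lt (mk_union_le _ _) (Cardinal.add_lt_of_lt hlaminf
        (union_small hreg f3 hFut hsmall3) (union_small hreg f4 hidx4 hsmall4))
    obtain ⟨z, hzC, hzbad⟩ := exists_mem_not_mem (show #bad < #C by rw [hCcard]; exact hbadlam)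
    simp only [hbaddef, Set.mem_union, not_or] at hzbad
    obtain ⟨hzT, hzU1, hzU2, hzU3, hzU4⟩ := hzbad
    have hzP : z ∉ P := fun h => hzT (Or.inl h)
    have hzZ : z ∉ Z := fun h => hzT (Or.inr h)
    have key1 : ∀ u ∈ T, ∀ a ∈ T, ∀ b ∈ T, a ≠ b → D z u ≠ D a b := by
      intro u hu a ha b hb hab heq
      exact hzU1 (Set.mem_iUnion.2 ⟨⟨⟨u, hu⟩, ⟨a, ha⟩, ⟨b, hb⟩⟩, ⟨hzC, hab, heq⟩⟩)
    have key2 : ∀ a ∈ T, ∀ b ∈ T, a ≠ b → D z a ≠ D z b := by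
      intro a ha b hb hab heq
      exact hzU2 (Set.mem_iUnion.2 ⟨⟨⟨a, ha⟩, ⟨b, hb⟩⟩, ⟨hzC, hab, heq⟩⟩)
    have key3 : ∀ B ∈ Fut, Compat B z := by
      intro B hB
      have h3 : ¬ (∀ x ∈ (B : Set (Fin n → ℝ)), ∀ x' ∈ (B : Set (Fin n → ℝ)), D x z = D x' z) :=
        fun hall => hzU3 (Set.mem_iUnion.2 ⟨⟨B, hB⟩, ⟨hzC, hall⟩⟩)
      push_neg at h3
      exact h3
    have key4 : ∀ B ∈ Fut, ∀ u ∈ T, Compat2 B z u := by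
      intro B hB u hu
      have h4 : ¬ (∀ x ∈ (B : Set (Fin n → ℝ)), D x z = D x u) :=
        fun hall => hzU4 (Set.mem_iUnion.2 ⟨⟨⟨B, hB⟩, ⟨u, hu⟩⟩, ⟨hzC, hall⟩⟩)
      push_neg at h4
      exact h4
    refine ⟨z, hzC, fun h => hzT h, ?_, ?_, ?_, ?_⟩
    · intro w hw
      rcases Set.mem_insert_iff.1 hw with he | hw
      · rw [he]; exact ⟨hzC, hzP⟩
      · exact hZsub hw
    · have hPZ : P ∪ insert z Z = insert z T := by
        rw [hT, Set.union_insert]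
      rw [hPZ]
      exact dInj_insert hZD key1 key2
    · intro z' hz' B hB
      rcases Set.mem_insert_iff.1 hz' with he | hz'
      · rw [he]; exact key3 B hB
      · exact hZF1 z' hz' B hB
    · intro z' hz' B hB u hu hne
      rcases Set.mem_insert_iff.1 hz' with he | hz'
      · rw [he] at hne ⊢
        rcases hu with hu | hu
        · exact key4 B hB u (Or.inl hu)
        · rcases Set.mem_insert_iff.1 hu with he' | hu
          · exact absurd he' hne
          · exact key4 B hB u (Or.inr hu)
      · rcases hu with hu | hu
        · exact hZF2 z' hz' B hB u (Or.inl hu) hne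
        · rcases Set.mem_insert_iff.1 hu with he' | hu
          · rw [he']
            exact compat2_symm (key4 B hB z' (Or.inr hz'))
          · exact hZF2 z' hz' B hB u (Or.inr hu) hne
  -- Step 2: Zorn
  have hchain : ∀ ch ⊆ {Z | Good Z}, IsChain (· ⊆ ·) ch → ch.Nonempty →
      ∃ ub ∈ {Z | Good Z}, ∀ s ∈ ch, s ⊆ ub := by
    intro ch hchsub hch hne
    refine ⟨⋃₀ ch, ?_, fun s hs => Set.subset_sUnion_of_mem hs⟩
    have hmem : ∀ Z ∈ ch, Good Z := fun Z hZ => hchsub hZ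
    refine ⟨Set.sUnion_subset fun Z hZ => (hmem Z hZ).1, ?_, ?_, ?_⟩
    · obtain ⟨Z₀, hZ₀⟩ := hne
      have hPU : P ∪ ⋃₀ ch = ⋃₀ ((fun Z => P ∪ Z) '' ch) := by
        ext x
        constructor
        · rintro (hx | ⟨Z, hZ, hxZ⟩)
          · exact ⟨P ∪ Z₀, ⟨Z₀, hZ₀, rfl⟩, Or.inl hx⟩
          · exact ⟨P ∪ Z, ⟨Z, hZ, rfl⟩, Or.inr hxZ⟩
        · rintro ⟨W, ⟨Z, hZ, rfl⟩, hx⟩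
          rcases hx with hx | hx
          · exact Or.inl hx
          · exact Or.inr ⟨Z, hZ, hx⟩
      rw [hPU]
      refine dInj_sUnion ?_ ?_
      · rintro W₁ ⟨Z₁, hZ₁, rfl⟩ W₂ ⟨Z₂, hZ₂, rfl⟩ hne'
        have : Z₁ ≠ Z₂ := fun h => hne' (by rw [h])
        rcases hch hZ₁ hZ₂ this with h | h
        · exact Or.inl (Set.union_subset_union_right _ h)
        · exact Or.inr (Set.union_subset_union_right _ h)
      · rintro W ⟨Z, hZ, rfl⟩
        exact (hmem Z hZ).2.1
    · rintro z ⟨Z, hZ, hzZ⟩ B hB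
      exact (hmem Z hZ).2.2.1 z hzZ B hB
    · rintro z ⟨Z, hZ, hzZ⟩ B hB u hu hune
      rcases hu with hu | hu
      · exact (hmem Z hZ).2.2.2 z hzZ B hB u (Or.inl hu) hune
      · obtain ⟨Z', hZ', huZ'⟩ := hu
        by_cases hZZ' : Z = Z'
        · exact (hmem Z hZ).2.2.2 z hzZ B hB u (Or.inr (hZZ' ▸ huZ')) hune
        rcases hch hZ hZ' hZZ' with h | h
        · exact (hmem Z' hZ').2.2.2 z (h hzZ) B hB u (Or.inr huZ') hune
        · exact (hmem Z hZ).2.2.2 z hzZ B hB u (Or.inr (h huZ')) hune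
  obtain ⟨M, -, hMgood, hMmax⟩ := zorn_subset_nonempty {Z | Good Z} hchain ∅ hGoodEmpty
  have hMcard : lam ≤ #M := by
    by_contra hlt
    push_neg at hlt
    obtain ⟨z, hzC, hzPM, hgood⟩ := step M hMgood hlt
    have hsub : insert z M ⊆ M := hMmax hgood (Set.subset_insert z M)
    exact hzPM (Or.inr (hsub (Set.mem_insert z M)))
  obtain ⟨Z, hZM, hZcard⟩ := Cardinal.le_mk_iff_exists_subset.1 hMcard
  obtain ⟨hMsub, hMD, hMF1, hMF2⟩ := hMgood
  refine ⟨Z, subset_trans hZM hMsub, hZcard, ?_, ?_, ?_⟩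
  · exact dInj_mono hMD (Set.union_subset_union_right _ hZM)
  · exact fun z hz B hB => hMF1 z (hZM hz) B hB
  · exact fun z hz B hB u hu hne =>
      hMF2 z (hZM hz) B hB u (Set.union_subset_union_right _ hZM hu) hne


/-! ### more helpers -/

lemma two_points {C : Set (Fin n → ℝ)} (h : ℵ₀ ≤ #C) : ∃ p ∈ C, ∃ q ∈ C, p ≠ q := by
  have h1 : (1 : Cardinal) < #C := lt_of_lt_of_le Cardinal.one_lt_aleph0 h
  have hnt : C.Nontrivial := Set.nontrivial_coe_sort.1 (Cardinal.one_lt_iff_nontrivial.1 h1)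
  obtain ⟨p, hp, q, hq, hpq⟩ := hnt
  exact ⟨p, hp, q, hq, hpq⟩

lemma diff_big {α : Type} {A B : Set α} (hA : ℵ₀ ≤ #A) (hB : #B < #A) :
    #(A \ B : Set α) = #A := by
  refine le_antisymm (mk_le_mk_of_subset Set.diff_subset) ?_
  by_contra hc
  push_neg at hc
  have h1 : A ⊆ (A \ B) ∪ B := fun x hx => by
    by_cases hxB : x ∈ B
    · exact Or.inr hxB
    · exact Or.inl ⟨hx, hxB⟩
  have h2 := le_trans (mk_le_mk_of_subset h1) (mk_union_le _ _)
  exact absurd h2 (not_le.2 (Cardinal.add_lt_of_lt hA hc hB))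

lemma sup_bound_of_lt_cof {κ : Cardinal} {I : Type} (f : I → Cardinal)
    (hI : #I < κ.ord.cof) (h : ∀ i, f i < κ) : ∃ b < κ, ∀ i, f i ≤ b := by
  have hords : iSup (fun i => (f i).ord) < κ.ord :=
    Ordinal.iSup_lt_ord hI (fun i => Cardinal.ord_lt_ord.2 (h i))
  refine ⟨(iSup (fun i => (f i).ord)).card, Cardinal.lt_ord.1 hords, fun i => ?_⟩
  calc f i = ((f i).ord).card := (Cardinal.card_ord _).symm
  _ ≤ _ := Ordinal.card_le_card (Ordinal.le_iSup _ i)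

lemma sum_lt_of_lt_cof {κ : Cardinal} (hκ : ℵ₀ ≤ κ) {I : Type} (f : I → Cardinal)
    (hI : #I < κ.ord.cof) (h : ∀ i, f i < κ) : Cardinal.sum f < κ := by
  obtain ⟨b, hb, hfb⟩ := sup_bound_of_lt_cof f hI h
  have hIκ : #I < κ := lt_of_lt_of_le hI (Ordinal.cof_ord_le κ)
  calc Cardinal.sum f ≤ Cardinal.sum (fun _ : I => b) := Cardinal.sum_le_sum _ _ hfb
  _ = #I * b := Cardinal.sum_const' I b
  _ < κ := Cardinal.mul_lt_of_lt hκ hIκ hb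

lemma succ_lt_of_not_isRegular {κ : Cardinal} (hκ : ℵ₀ ≤ κ) (hnr : ¬κ.IsRegular)
    {c : Cardinal} (hc : c < κ) : Order.succ c < κ := by
  have hle : Order.succ c ≤ κ := Order.succ_le_iff.2 hc
  rcases lt_or_eq_of_le hle with h | h
  · exact h
  · exfalso
    by_cases hfin : c < ℵ₀
    · have h1 : Order.succ c ≤ ℵ₀ := Order.succ_le_iff.2 hfin
      have h2 : κ = ℵ₀ := le_antisymm (h ▸ h1) hκ
      exact hnr (h2 ▸ Cardinal.isRegular_aleph0)
    · push_neg at hfin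
      exact hnr (h ▸ Cardinal.isRegular_succ hfin)

/-! ### tournaments and Dushnik–Miller -/

lemma tourn {ι : Type} [Nonempty ι] (E : ι → ι → Prop) :
    ∀ (m : ℕ) (V : Finset ι), (∀ a ∈ V, ∀ b ∈ V, a ≠ b → E a b ∨ E b a) →
      2 ^ m ≤ V.card → ∃ v : ℕ → ι, (∀ t < m, v t ∈ V) ∧
        ∀ t s, t < s → s < m → E (v t) (v s) := by
  intro m
  induction m with
  | zero =>
    intro V _ _
    exact ⟨fun _ => Classical.arbitrary ι, fun t ht => absurd ht (Nat.not_lt_zero t),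
      fun t s _ hs => absurd hs (Nat.not_lt_zero s)⟩
  | succ m ih =>
    classical
    intro V htot hcard
    have hVne : V.Nonempty := Finset.card_pos.1 (lt_of_lt_of_le (pow_pos two_pos (m+1)) hcard)
    obtain ⟨a, ha⟩ := hVne
    set Out := V.filter (fun b => b ≠ a ∧ E a b) with hOutdef
    set Inn := V.filter (fun b => b ≠ a ∧ E b a) with hInndef
    have hsub : V.erase a ⊆ Out ∪ Inn := by
      intro b hb
      have hbV := Finset.mem_of_mem_erase hb
      have hba : b ≠ a := Finset.ne_of_mem_erase hb
      rcases htot a ha b hbV (fun hh => hba hh.symm) with hE | hE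
      · exact Finset.mem_union_left _ (Finset.mem_filter.2 ⟨hbV, hba, hE⟩)
      · exact Finset.mem_union_right _ (Finset.mem_filter.2 ⟨hbV, hba, hE⟩)
    have hcard2 : 2 ^ m ≤ Out.card ∨ 2 ^ m ≤ Inn.card := by
      by_contra hcon
      push_neg at hcon
      have h1 := Finset.card_le_card hsub
      have h2 := Finset.card_union_le Out Inn
      have h3 := Finset.card_erase_of_mem ha
      have h4 : 0 < V.card := Finset.card_pos.2 ⟨a, ha⟩
      have h5 : 2 ^ (m + 1) = 2 * 2 ^ m := by ring
      omega
    rcases hcard2 with hbig | hbig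
    · obtain ⟨v, hvmem, hvch⟩ := ih Out
        (fun x hx y hy hxy => htot x (Finset.mem_of_mem_filter x hx)
          y (Finset.mem_of_mem_filter y hy) hxy) hbig
      refine ⟨fun k => if k = 0 then a else v (k - 1), ?_, ?_⟩
      · intro t ht
        by_cases h0 : t = 0
        · simp [h0, ha]
        · simp only [if_neg h0]
          exact Finset.mem_of_mem_filter _ (hvmem (t-1) (by omega))
      · intro t s hts hs
        have hs0 : s ≠ 0 := by omega
        by_cases h0 : t = 0
        · simp only [h0, if_pos rfl, if_neg hs0]
          have := hvmem (s-1) (by omega)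
          exact ((Finset.mem_filter.1 this).2).2
        · simp only [if_neg h0, if_neg hs0]
          exact hvch (t-1) (s-1) (by omega) (by omega)
    · obtain ⟨v, hvmem, hvch⟩ := ih Inn
        (fun x hx y hy hxy => htot x (Finset.mem_of_mem_filter x hx)
          y (Finset.mem_of_mem_filter y hy) hxy) hbig
      refine ⟨fun k => if k = m then a else v k, ?_, ?_⟩
      · intro t ht
        by_cases h0 : t = m
        · simp [h0, ha]
        · simp only [if_neg h0]
          exact Finset.mem_of_mem_filter _ (hvmem t (by omega))
      · intro t s hts hs
        have ht0 : t ≠ m := by omega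
        by_cases h0 : s = m
        · simp only [if_neg ht0, if_pos h0]
          have := hvmem t (by omega)
          exact ((Finset.mem_filter.1 this).2).2
        · simp only [if_neg h0, if_neg ht0]
          exact hvch t s hts (by omega)

lemma DM {θ : Cardinal} (hreg : θ.IsRegular) {ι : Type}
    (bad : ι → ι → Prop) (hsymm : ∀ i j, bad i j → bad j i) :
    ∀ (N : ℕ) (A : Set ι), θ ≤ #A →
      (¬ ∃ V : Finset ι, ↑V ⊆ A ∧ V.card = N ∧ ∀ a ∈ V, ∀ b ∈ V, a ≠ b → bad a b) →
      ∃ B ⊆ A, #B = θ ∧ ∀ i ∈ B, ∀ j ∈ B, i ≠ j → ¬ bad i j := by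
  intro N
  induction N with
  | zero =>
    intro A _ hno
    exact absurd ⟨∅, by simp, by simp, by simp⟩ hno
  | succ N ih =>
    classical
    intro A hA hno
    by_cases hbig : ∃ a ∈ A, θ ≤ #{b ∈ A | b ≠ a ∧ bad a b}
    · obtain ⟨a, haA, ha⟩ := hbig
      have hsubA : {b ∈ A | b ≠ a ∧ bad a b} ⊆ A := fun b hb => hb.1
      have hnoN : ¬ ∃ V : Finset ι, ↑V ⊆ {b ∈ A | b ≠ a ∧ bad a b} ∧ V.card = N ∧
          ∀ x ∈ V, ∀ y ∈ V, x ≠ y → bad x y := by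
        rintro ⟨V, hVsub, hVcard, hVbad⟩
        have haV : a ∉ V := fun hmem => ((hVsub hmem).2.1) rfl
        refine hno ⟨insert a V, ?_, ?_, ?_⟩
        · intro x hx
          simp only [Finset.coe_insert, Set.mem_insert_iff] at hx
          rcases hx with he | hx'
          · exact he ▸ haA
          · exact (hVsub hx').1
        · rw [Finset.card_insert_of_notMem haV, hVcard]
        · intro x hx y hy hxy
          rcases Finset.mem_insert.1 hx with he | hx
          · rcases Finset.mem_insert.1 hy with he' | hy
            · exact absurd (he.trans he'.symm) hxy
            · rw [he]; exact (hVsub hy).2.2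
          rcases Finset.mem_insert.1 hy with he' | hy
          · rw [he']; exact hsymm _ _ (hVsub hx).2.2
          · exact hVbad x hx y hy hxy
      obtain ⟨B, hBsub, hBcard, hBfree⟩ := ih _ ha hnoN
      exact ⟨B, subset_trans hBsub hsubA, hBcard, hBfree⟩
    · push_neg at hbig
      set Fam : Set (Set ι) := {B | B ⊆ A ∧ ∀ i ∈ B, ∀ j ∈ B, i ≠ j → ¬ bad i j} with hFam
      have hchain : ∀ ch ⊆ Fam, IsChain (· ⊆ ·) ch → ch.Nonempty →
          ∃ ub ∈ Fam, ∀ s ∈ ch, s ⊆ ub := by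
        intro ch hchsub hch _
        refine ⟨⋃₀ ch, ⟨Set.sUnion_subset fun B hB => (hchsub hB).1, ?_⟩,
          fun s hs => Set.subset_sUnion_of_mem hs⟩
        rintro i ⟨B₁, hB₁, hi⟩ j ⟨B₂, hB₂, hj⟩ hij
        by_cases hBB : B₁ = B₂
        · exact (hchsub hB₂).2 i (hBB ▸ hi) j hj hij
        rcases hch hB₁ hB₂ hBB with h | h
        · exact (hchsub hB₂).2 i (h hi) j hj hij
        · exact (hchsub hB₁).2 i hi j (h hj) hij
      have hFamEmpty : (∅ : Set ι) ∈ Fam := ⟨Set.empty_subset _, by simp⟩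
      obtain ⟨M, -, hMFam, hMmax⟩ := zorn_subset_nonempty Fam hchain ∅ hFamEmpty
      have hMcard : θ ≤ #M := by
        by_contra hlt
        push_neg at hlt
        set U : Set ι := M ∪ ⋃ (a : ↥M), {b ∈ A | b ≠ (a : ι) ∧ bad (a : ι) b} with hU
        have hUcard : #U < θ := by
          refine lt_of_le_of_lt (mk_union_le _ _)
            (Cardinal.add_lt_of_lt hreg.aleph0_le hlt ?_)
          exact union_small hreg _ hlt (fun a => hbig (a : ι) (hMFam.1 a.2))
        obtain ⟨c, hcA, hcU⟩ := exists_mem_not_mem (lt_of_lt_of_le hUcard hA)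
        have hcM : c ∉ M := fun h => hcU (Or.inl h)
        have hgood : insert c M ∈ Fam := by
          refine ⟨fun x hx => ?_, ?_⟩
          · rcases Set.mem_insert_iff.1 hx with he | hx
            · exact he ▸ hcA
            · exact hMFam.1 hx
          · intro i hi j hj hij hbadij
            rcases Set.mem_insert_iff.1 hi with he | hi
            · rcases Set.mem_insert_iff.1 hj with he' | hj
              · exact hij (he.trans he'.symm)
              · rw [he] at hij hbadij
                exact hcU (Or.inr (Set.mem_iUnion.2 ⟨⟨j, hj⟩, hcA,
                  (fun hh => hij hh), hsymm _ _ hbadij⟩))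
            rcases Set.mem_insert_iff.1 hj with he' | hj
            · rw [he'] at hij hbadij
              exact hcU (Or.inr (Set.mem_iUnion.2 ⟨⟨i, hi⟩, hcA,
                (fun hh => hij hh.symm), hbadij⟩))
            · exact hMFam.2 i hi j hj hij hbadij
        have := hMmax hgood (Set.subset_insert c M)
        exact hcM (this (Set.mem_insert c M))
      obtain ⟨B, hBM, hBcard⟩ := Cardinal.le_mk_iff_exists_subset.1 hMcard
      exact ⟨B, subset_trans hBM hMFam.1, hBcard,
        fun i hi j hj hij => hMFam.2 i (hBM hi) j (hBM hj) hij⟩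

/-! ### bounded trap chains -/

def TrapP (A B : Set (Fin n → ℝ)) : Prop := ∀ y ∈ A, ∀ y' ∈ A, ∀ x ∈ B, D x y = D x y'

lemma not_straddle_iff {A B : Set (Fin n → ℝ)} : ¬ Straddle A B ↔ TrapP A B := by
  unfold Straddle TrapP
  push_neg
  rfl

lemma trap_chain_bound (Cs : ℕ → Set (Fin n → ℝ))
    (hnt : ∀ t ≤ n + 2, ∃ p ∈ Cs t, ∃ q ∈ Cs t, p ≠ q)
    (htrap : ∀ t s, t < s → s ≤ n + 2 → TrapP (Cs t) (Cs s)) : False := by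
  classical
  set M : ℕ → Submodule ℝ (Qsp n) := fun s =>
    Submodule.span ℝ (⋃ t ∈ Finset.range s,
      {q : Qsp n | ∃ y ∈ Cs t, ∃ y' ∈ Cs t, q = Phi y - Phi y'}) with hM
  have hMle : ∀ s, s ≤ n + 2 → M s ≤ Wsp (Cs s) := by
    intro s hs
    refine Submodule.span_le.2 ?_
    rintro q hq
    simp only [Set.mem_iUnion] at hq
    obtain ⟨t, ht, y, hy, y', hy', rfl⟩ := hq
    intro x hx
    rw [qev_bis, htrap t s (Finset.mem_range.1 ht) hs y hy y' hy' x hx, sub_self]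
  have hMmono : ∀ s, M s ≤ M (s+1) := by
    intro s
    refine Submodule.span_mono ?_
    intro q hq
    simp only [Set.mem_iUnion] at hq ⊢
    obtain ⟨t, ht, hrest⟩ := hq
    exact ⟨t, Finset.mem_range.2 (by have := Finset.mem_range.1 ht; omega), hrest⟩
  have hstrict : ∀ s, s ≤ n + 2 → M s < M (s + 1) := by
    intro s hs
    obtain ⟨p, hp, q, hq, hpq⟩ := hnt s hs
    have hgen : Phi p - Phi q ∈ M (s+1) := by
      refine Submodule.subset_span ?_
      simp only [Set.mem_iUnion]
      exact ⟨s, Finset.mem_range.2 (by omega), p, hp, q, hq, rfl⟩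
    have hnot : Phi p - Phi q ∉ Wsp (Cs s) := by
      intro hmem
      have h1 := (mem_Wsp.1 hmem) p hp
      rw [qev_bis, D_self] at h1
      have h2 : D p q = 0 := by linarith
      exact D_ne_zero hpq h2
    refine lt_of_le_of_ne (hMmono s) (fun h => hnot (hMle s hs ?_))
    rw [h]
    exact hgen
  have hrank : ∀ s, s ≤ n + 3 → s ≤ Module.finrank ℝ (↥(M s)) := by
    intro s
    induction s with
    | zero => intro _; exact Nat.zero_le _
    | succ s ihs =>
      intro hs
      have h1 := hstrict s (by omega)
      have h2 := Submodule.finrank_lt_finrank_of_lt h1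
      have h3 := ihs (by omega)
      omega
  have hA := hrank (n+3) le_rfl
  have hB : Module.finrank ℝ (↥(M (n+3))) ≤ Module.finrank ℝ (Qsp n) := Submodule.finrank_le _
  have hQ : Module.finrank ℝ (Qsp n) = n + 2 := by
    simp [Module.finrank_prod, Module.finrank_pi]
    omega
  omega


/-! ### the regular case -/

lemma main_of_regular {X : Set (Fin n → ℝ)} (hinf : ℵ₀ ≤ #X) (hreg : (#X).IsRegular) :
    ∃ Y ⊆ X, #Y = #X ∧ DInj Y := by
  obtain ⟨C, hCX, hC⟩ := exists_pool X (#X) le_rfl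
  have h0 : #(∅ : Set (Fin n → ℝ)) < #X := by
    simp only [Cardinal.mk_emptyCollection]
    exact lt_of_lt_of_le Cardinal.aleph0_pos hinf
  have h0' : #(∅ : Set (Set (Fin n → ℝ))) < #X := by
    simp only [Cardinal.mk_emptyCollection]
    exact lt_of_lt_of_le Cardinal.aleph0_pos hinf
  obtain ⟨Z, hZsub, hZcard, hZD, -, -⟩ := TWP hreg hC (P := ∅) h0 dInj_empty
    (by simp) (by simp) (Fut := ∅) h0' (by simp) (by simp)
  refine ⟨Z, subset_trans (subset_trans hZsub Set.diff_subset) hCX, hZcard, ?_⟩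
  have := hZD
  rwa [Set.empty_union] at this

/-! ### the singular case -/

lemma main_of_singular {X : Set (Fin n → ℝ)} (hinf : ℵ₀ ≤ #X) (hnr : ¬(#X).IsRegular) :
    ∃ Y ⊆ X, #Y = #X ∧ DInj Y := by
  classical
  set κ := #X with hκdef
  have hθreg : (κ.ord.cof).IsRegular := Cardinal.isRegular_cof (Cardinal.isSuccLimit_ord hinf)
  set θ := κ.ord.cof with hθdef
  have hθinf : ℵ₀ ≤ θ := hθreg.aleph0_le
  have hθκ : θ < κ :=
    lt_of_le_of_ne (Ordinal.cof_ord_le κ) (fun h => hnr ⟨hinf, le_of_eq h.symm⟩)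
  -- the index type
  have hιmk : #(θ.ord.ToType) = θ := Cardinal.mk_ord_toType θ
  have hιseg : ∀ t : θ.ord.ToType, #{s : θ.ord.ToType | s < t} < θ := by
    intro t
    exact Cardinal.mk_Iio_ord_toType t
  haveI hιne : Nonempty (θ.ord.ToType) := by
    refine Cardinal.mk_ne_zero_iff.1 ?_
    rw [hιmk]
    exact ne_of_gt (lt_of_lt_of_le Cardinal.aleph0_pos hθinf)
  -- a cofinal family of cardinals below κ
  obtain ⟨S, hSunb, hScard⟩ : ∃ S : Set κ.ord.ToType, (∀ a, ∃ b ∈ S, ¬ b < a) ∧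
      Cardinal.mk S = κ.ord.cof := by
    obtain ⟨S, hS, hS'⟩ := Order.exists_cof_eq κ.ord.ToType
    refine ⟨S, fun a => ?_, by rw [hS', Ordinal.cof_toType]⟩
    obtain ⟨b, hb, hab⟩ := hS a
    exact ⟨b, hb, not_lt.2 hab⟩
  have hmkS : #(θ.ord.ToType) = #↥S := by rw [hιmk, hScard]
  obtain ⟨e⟩ := Cardinal.eq.1 hmkS
  set μ : θ.ord.ToType → Cardinal := fun t =>
    ((@Ordinal.typein (κ.ord.ToType) (· < ·) isWellOrder_lt).toRelEmbedding
      ((e t : κ.ord.ToType))).card with hμdef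
  have hμκ : ∀ t, μ t < κ := fun t => Cardinal.card_typein_toType_lt κ _
  have hμcof : ∀ c, c < κ → ∃ t, c ≤ μ t := by
    intro c hc
    have h1 : c.ord < @Ordinal.type (κ.ord.ToType) (· < ·) isWellOrder_lt := by
      rw [Ordinal.type_toType]
      exact Cardinal.ord_lt_ord.2 hc
    obtain ⟨s, hs⟩ := (@Ordinal.typein_surj (κ.ord.ToType) (· < ·) isWellOrder_lt _ h1)
    obtain ⟨b, hbS, hbs⟩ := hSunb s
    have hsb : s ≤ b := not_lt.1 hbs
    have h2 : (@Ordinal.typein (κ.ord.ToType) (· < ·) isWellOrder_lt).toRelEmbedding s ≤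
        (@Ordinal.typein (κ.ord.ToType) (· < ·) isWellOrder_lt).toRelEmbedding b := by
      rcases lt_or_eq_of_le hsb with h | h
      · exact le_of_lt ((@Ordinal.typein_lt_typein (κ.ord.ToType) (· < ·) isWellOrder_lt _ _).2 h)
      · rw [h]
    refine ⟨e.symm ⟨b, hbS⟩, ?_⟩
    have h3 : (e (e.symm ⟨b, hbS⟩) : κ.ord.ToType) = b := by rw [Equiv.apply_symm_apply]
    rw [hμdef]
    simp only [h3]
    calc c = c.ord.card := (Cardinal.card_ord c).symm
    _ = ((@Ordinal.typein (κ.ord.ToType) (· < ·) isWellOrder_lt).toRelEmbedding s).card := by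
      rw [hs]
    _ ≤ _ := Ordinal.card_le_card h2
  -- the increasing sequence of regular block sizes
  set lam : θ.ord.ToType → Cardinal :=
    (IsWellFounded.wf (α := θ.ord.ToType) (r := (· < ·))).fix
      (fun t rec => Order.succ (θ + μ t +
        Cardinal.sum (fun s : {s : θ.ord.ToType // s < t} => rec s s.2))) with hlamdef
  have hlam_eq : ∀ t, lam t = Order.succ (θ + μ t +
      Cardinal.sum (fun s : {s : θ.ord.ToType // s < t} => lam s)) := by
    intro t
    rw [hlamdef]
    exact WellFounded.fix_eq _ _ t
  have hbase_inf : ∀ t, ℵ₀ ≤ θ + μ t +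
      Cardinal.sum (fun s : {s : θ.ord.ToType // s < t} => lam s) := by
    intro t
    calc ℵ₀ ≤ θ := hθinf
    _ ≤ θ + μ t := self_le_add_right _ _
    _ ≤ _ := self_le_add_right _ _
  have hlam_lt : ∀ t, lam t < κ := by
    have key : ∀ t, (∀ s, s < t → lam s < κ) → lam t < κ := by
      intro t ih
      rw [hlam_eq t]
      refine succ_lt_of_not_isRegular hinf hnr ?_
      refine Cardinal.add_lt_of_lt hinf (Cardinal.add_lt_of_lt hinf hθκ (hμκ t)) ?_
      refine sum_lt_of_lt_cof hinf _ ?_ (fun s => ih s s.2)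
      exact hιseg t
    exact fun t => (IsWellFounded.wf (α := θ.ord.ToType) (r := (· < ·))).induction t key
  have hlam_reg : ∀ t, (lam t).IsRegular := by
    intro t
    rw [hlam_eq t]
    exact Cardinal.isRegular_succ (hbase_inf t)
  have hlam_inf : ∀ t, ℵ₀ ≤ lam t := fun t => (hlam_reg t).aleph0_le
  have hθ_lt_lam : ∀ t, θ < lam t := by
    intro t
    rw [hlam_eq t]
    calc θ ≤ θ + μ t + _ := le_trans (self_le_add_right _ _) (self_le_add_right _ _)
    _ < _ := Order.lt_succ _
  have hμ_lt_lam : ∀ t, μ t < lam t := by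
    intro t
    rw [hlam_eq t]
    calc μ t ≤ θ + μ t := self_le_add_left _ _
    _ ≤ θ + μ t + _ := self_le_add_right _ _
    _ < _ := Order.lt_succ _
  have hsum_lt_lam : ∀ t,
      Cardinal.sum (fun s : {s : θ.ord.ToType // s < t} => lam s) < lam t := by
    intro t
    conv_rhs => rw [hlam_eq t]
    calc Cardinal.sum (fun s : {s : θ.ord.ToType // s < t} => lam s)
        ≤ θ + μ t + _ := self_le_add_left _ _
    _ < _ := Order.lt_succ _
  have hlam_mono : ∀ s t, s < t → lam s < lam t := by
    intro s t hst
    calc lam s ≤ Cardinal.sum (fun s' : {s' : θ.ord.ToType // s' < t} => lam s') :=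
      Cardinal.le_sum (fun s' : {s' : θ.ord.ToType // s' < t} => lam s') ⟨s, hst⟩
    _ < lam t := hsum_lt_lam t
  -- the pools
  set Cpool : θ.ord.ToType → Set (Fin n → ℝ) :=
    (IsWellFounded.wf (α := θ.ord.ToType) (r := (· < ·))).fix
      (fun t rec =>
        if h : lam t ≤ #(↥(X \ ⋃ s : {s : θ.ord.ToType // s < t}, rec s s.2)) then
          Classical.choose (exists_pool _ (lam t) h)
        else ∅) with hCdef
  have hC_eq : ∀ t, Cpool t =
      (if h : lam t ≤ #(↥(X \ ⋃ s : {s : θ.ord.ToType // s < t}, Cpool s)) then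
        Classical.choose (exists_pool _ (lam t) h) else ∅) := by
    intro t
    rw [hCdef]
    exact WellFounded.fix_eq _ _ t
  have hpool : ∀ t, IsPool (lam t) (Cpool t) ∧
      Cpool t ⊆ X \ ⋃ s : {s : θ.ord.ToType // s < t}, Cpool s := by
    have key : ∀ t, (∀ s, s < t → IsPool (lam s) (Cpool s) ∧
        Cpool s ⊆ X \ ⋃ s' : {s' : θ.ord.ToType // s' < s}, Cpool s') →
        IsPool (lam t) (Cpool t) ∧
          Cpool t ⊆ X \ ⋃ s : {s : θ.ord.ToType // s < t}, Cpool s := by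
      intro t ih
      have hU : #(↥(⋃ s : {s : θ.ord.ToType // s < t}, Cpool s)) < κ := by
        refine lt_of_le_of_lt Cardinal.mk_iUnion_le_sum_mk ?_
        refine lt_of_le_of_lt
          (Cardinal.sum_le_sum _ (fun s : {s : θ.ord.ToType // s < t} => lam s)
            (fun s => le_of_eq (ih s s.2).1.1)) ?_
        exact sum_lt_of_lt_cof hinf _ (hιseg t) (fun s => hlam_lt s)
      have hcond : lam t ≤ #(↥(X \ ⋃ s : {s : θ.ord.ToType // s < t}, Cpool s)) := by
        rw [diff_big hinf hU]
        exact le_of_lt (hlam_lt t)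
      constructor
      · rw [hC_eq t, dif_pos hcond]
        exact (Classical.choose_spec (exists_pool _ (lam t) hcond)).2
      · rw [hC_eq t, dif_pos hcond]
        exact (Classical.choose_spec (exists_pool _ (lam t) hcond)).1
    exact fun t => (IsWellFounded.wf (α := θ.ord.ToType) (r := (· < ·))).induction t key
  have hpool_card : ∀ t, #(Cpool t) = lam t := fun t => (hpool t).1.1
  have hpool_X : ∀ t, Cpool t ⊆ X := fun t => subset_trans (hpool t).2 Set.diff_subset
  have hpool_two : ∀ t, ∃ p ∈ Cpool t, ∃ q ∈ Cpool t, p ≠ q := by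
    intro t
    refine two_points ?_
    rw [hpool_card t]
    exact hlam_inf t
  -- thinning out traps
  set badrel : θ.ord.ToType → θ.ord.ToType → Prop := fun i j =>
    ¬ Straddle (Cpool i) (Cpool j) ∨ ¬ Straddle (Cpool j) (Cpool i) with hbadrel
  have hbadsymm : ∀ i j, badrel i j → badrel j i := fun i j h => h.symm
  have hnoclique : ¬ ∃ V : Finset (θ.ord.ToType), ↑V ⊆ (Set.univ : Set (θ.ord.ToType)) ∧
      V.card = 2 ^ (n + 3) ∧ ∀ a ∈ V, ∀ b ∈ V, a ≠ b → badrel a b := by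
    rintro ⟨V, -, hVcard, hVbad⟩
    have htot : ∀ a ∈ V, ∀ b ∈ V, a ≠ b →
        TrapP (Cpool a) (Cpool b) ∨ TrapP (Cpool b) (Cpool a) := by
      intro a ha b hb hab
      rcases hVbad a ha b hb hab with h | h
      · exact Or.inl (not_straddle_iff.1 h)
      · exact Or.inr (not_straddle_iff.1 h)
    obtain ⟨v, hvmem, hvch⟩ := tourn (fun i j => TrapP (Cpool i) (Cpool j)) (n + 3) V htot
      (le_of_eq hVcard.symm)
    exact trap_chain_bound (fun k => Cpool (v k)) (fun t _ => hpool_two (v t))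
      (fun t s hts hs => hvch t s hts (by omega))
  have hunivcard : θ ≤ #(↥(Set.univ : Set (θ.ord.ToType))) := by
    rw [Cardinal.mk_univ, hιmk]
  obtain ⟨Bset, -, hBcard, hBfree⟩ := DM hθreg badrel hbadsymm (2 ^ (n + 3)) Set.univ
    hunivcard hnoclique
  have hBstr : ∀ i ∈ Bset, ∀ j ∈ Bset, i ≠ j → Straddle (Cpool i) (Cpool j) := by
    intro i hi j hj hij
    by_contra hc
    exact hBfree i hi j hj hij (Or.inl hc)
  -- the future pools
  set FutS : θ.ord.ToType → Set (Set (Fin n → ℝ)) := fun t =>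
    (fun s => Cpool s) '' {s | s ∈ Bset ∧ t < s} with hFutdef
  have hFutcard : ∀ t, #(FutS t) < lam t := by
    intro t
    refine lt_of_le_of_lt Cardinal.mk_image_le ?_
    refine lt_of_le_of_lt (mk_le_mk_of_subset (Set.subset_univ _)) ?_
    refine lt_of_le_of_lt (le_of_eq Cardinal.mk_univ) ?_
    rw [hιmk]
    exact hθ_lt_lam t
  have hFutstr : ∀ t, t ∈ Bset → ∀ Bp ∈ FutS t,
      Straddle Bp (Cpool t) ∧ Straddle (Cpool t) Bp := by
    intro t ht Bp hBp
    obtain ⟨s, ⟨hsB, hts⟩, rfl⟩ := hBp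
    exact ⟨hBstr s hsB t ht (fun h => (ne_of_lt hts) h.symm),
      hBstr t ht s hsB (ne_of_lt hts)⟩
  -- the blocks
  set Zb : θ.ord.ToType → Set (Fin n → ℝ) :=
    (IsWellFounded.wf (α := θ.ord.ToType) (r := (· < ·))).fix
      (fun t rec =>
        if h : t ∈ Bset ∧ DInj (⋃ s : {s : θ.ord.ToType // s < t}, rec s s.2) ∧
            #(↥(⋃ s : {s : θ.ord.ToType // s < t}, rec s s.2)) < lam t ∧
            (∀ p ∈ ⋃ s : {s : θ.ord.ToType // s < t}, rec s s.2, Compat (Cpool t) p) ∧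
            (∀ p ∈ ⋃ s : {s : θ.ord.ToType // s < t}, rec s s.2,
              ∀ p' ∈ ⋃ s : {s : θ.ord.ToType // s < t}, rec s s.2, p ≠ p' →
                Compat2 (Cpool t) p p') then
          Classical.choose (TWP (hlam_reg t) (hpool t).1 h.2.2.1 h.2.1 h.2.2.2.1 h.2.2.2.2
            (hFutcard t) (fun Bp hBp => (hFutstr t h.1 Bp hBp).1)
            (fun Bp hBp => (hFutstr t h.1 Bp hBp).2))
        else ∅) with hZdef
  have hZ_eq : ∀ t, Zb t =
      (if h : t ∈ Bset ∧ DInj (⋃ s : {s : θ.ord.ToType // s < t}, Zb s) ∧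
            #(↥(⋃ s : {s : θ.ord.ToType // s < t}, Zb s)) < lam t ∧
            (∀ p ∈ ⋃ s : {s : θ.ord.ToType // s < t}, Zb s, Compat (Cpool t) p) ∧
            (∀ p ∈ ⋃ s : {s : θ.ord.ToType // s < t}, Zb s,
              ∀ p' ∈ ⋃ s : {s : θ.ord.ToType // s < t}, Zb s, p ≠ p' →
                Compat2 (Cpool t) p p') then
          Classical.choose (TWP (hlam_reg t) (hpool t).1 h.2.2.1 h.2.1 h.2.2.2.1 h.2.2.2.2
            (hFutcard t) (fun Bp hBp => (hFutstr t h.1 Bp hBp).1)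
            (fun Bp hBp => (hFutstr t h.1 Bp hBp).2))
        else ∅) := by
    intro t
    rw [hZdef]
    exact WellFounded.fix_eq _ _ t
  -- the master induction
  have hBS : ∀ t, (Zb t ⊆ Cpool t) ∧
      (∀ x ∈ Zb t, x ∉ ⋃ s : {s : θ.ord.ToType // s < t}, Zb s) ∧
      (#(Zb t) ≤ lam t) ∧ (t ∈ Bset → #(Zb t) = lam t) ∧
      DInj ((⋃ s : {s : θ.ord.ToType // s < t}, Zb s) ∪ Zb t) ∧
      (∀ z ∈ Zb t, ∀ s', s' ∈ Bset → t < s' →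
        Compat (Cpool s') z ∧
        ∀ u ∈ (⋃ s : {s : θ.ord.ToType // s < t}, Zb s) ∪ Zb t, u ≠ z →
          Compat2 (Cpool s') z u) := by
    have key : ∀ t, (∀ s, s < t → (Zb s ⊆ Cpool s) ∧
        (∀ x ∈ Zb s, x ∉ ⋃ s' : {s' : θ.ord.ToType // s' < s}, Zb s') ∧
        (#(Zb s) ≤ lam s) ∧ (s ∈ Bset → #(Zb s) = lam s) ∧
        DInj ((⋃ s' : {s' : θ.ord.ToType // s' < s}, Zb s') ∪ Zb s) ∧
        (∀ z ∈ Zb s, ∀ s', s' ∈ Bset → s < s' →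
          Compat (Cpool s') z ∧
          ∀ u ∈ (⋃ s' : {s' : θ.ord.ToType // s' < s}, Zb s') ∪ Zb s, u ≠ z →
            Compat2 (Cpool s') z u)) →
        (Zb t ⊆ Cpool t) ∧
        (∀ x ∈ Zb t, x ∉ ⋃ s : {s : θ.ord.ToType // s < t}, Zb s) ∧
        (#(Zb t) ≤ lam t) ∧ (t ∈ Bset → #(Zb t) = lam t) ∧
        DInj ((⋃ s : {s : θ.ord.ToType // s < t}, Zb s) ∪ Zb t) ∧
        (∀ z ∈ Zb t, ∀ s', s' ∈ Bset → t < s' →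
          Compat (Cpool s') z ∧
          ∀ u ∈ (⋃ s : {s : θ.ord.ToType // s < t}, Zb s) ∪ Zb t, u ≠ z →
            Compat2 (Cpool s') z u) := by
      intro t ih
      -- membership pushing up
      have hup : ∀ s, s < t → ∀ z ∈ Zb s, ∀ s', s' < t → s ≤ s' →
          z ∈ (⋃ u : {u : θ.ord.ToType // u < s'}, Zb u) ∪ Zb s' := by
        intro s hs z hz s' _ hss'
        rcases lt_or_eq_of_le hss' with h | h
        · exact Or.inl (Set.mem_iUnion.2 ⟨⟨s, h⟩, hz⟩)
        · exact Or.inr (h ▸ hz)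
      have hPD : DInj (⋃ s : {s : θ.ord.ToType // s < t}, Zb s) := by
        intro a ha b hb c hc d hd hab hcd heq
        obtain ⟨⟨sa, hsa⟩, haz⟩ := Set.mem_iUnion.1 ha
        obtain ⟨⟨sb, hsb⟩, hbz⟩ := Set.mem_iUnion.1 hb
        obtain ⟨⟨sc, hsc⟩, hcz⟩ := Set.mem_iUnion.1 hc
        obtain ⟨⟨sd, hsd⟩, hdz⟩ := Set.mem_iUnion.1 hd
        set m := max (max sa sb) (max sc sd) with hm
        have hmt : m < t := max_lt (max_lt hsa hsb) (max_lt hsc hsd)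
        exact (ih m hmt).2.2.2.2.1
          (hup sa hsa a haz m hmt (le_max_of_le_left (le_max_left _ _)))
          (hup sb hsb b hbz m hmt (le_max_of_le_left (le_max_right _ _)))
          (hup sc hsc c hcz m hmt (le_max_of_le_right (le_max_left _ _)))
          (hup sd hsd d hdz m hmt (le_max_of_le_right (le_max_right _ _)))
          hab hcd heq
      have hPcard : #(↥(⋃ s : {s : θ.ord.ToType // s < t}, Zb s)) < lam t := by
        refine lt_of_le_of_lt Cardinal.mk_iUnion_le_sum_mk ?_
        refine lt_of_le_of_lt
          (Cardinal.sum_le_sum _ (fun s : {s : θ.ord.ToType // s < t} => lam s)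
            (fun s => (ih s s.2).2.2.1)) ?_
        exact hsum_lt_lam t
      by_cases ht : t ∈ Bset
      · -- the interesting case: t is a block index
        have hPc : ∀ p ∈ ⋃ s : {s : θ.ord.ToType // s < t}, Zb s, Compat (Cpool t) p := by
          intro p hp
          obtain ⟨⟨s, hs⟩, hpz⟩ := Set.mem_iUnion.1 hp
          exact ((ih s hs).2.2.2.2.2 p hpz t ht hs).1
        have hPc2 : ∀ p ∈ ⋃ s : {s : θ.ord.ToType // s < t}, Zb s,
            ∀ p' ∈ ⋃ s : {s : θ.ord.ToType // s < t}, Zb s, p ≠ p' →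
              Compat2 (Cpool t) p p' := by
          intro p hp p' hp' hpp'
          obtain ⟨⟨s, hs⟩, hpz⟩ := Set.mem_iUnion.1 hp
          obtain ⟨⟨s', hs'⟩, hpz'⟩ := Set.mem_iUnion.1 hp'
          rcases lt_trichotomy s s' with h | h | h
          · exact compat2_symm (((ih s' hs').2.2.2.2.2 p' hpz' t ht hs').2 p
              (Or.inl (Set.mem_iUnion.2 ⟨⟨s, h⟩, hpz⟩)) hpp')
          · exact ((ih s hs).2.2.2.2.2 p hpz t ht hs).2 p'
              (Or.inr (h ▸ hpz')) (fun hh => hpp' hh.symm)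
          · exact ((ih s hs).2.2.2.2.2 p hpz t ht hs).2 p'
              (Or.inl (Set.mem_iUnion.2 ⟨⟨s', h⟩, hpz'⟩)) (fun hh => hpp' hh.symm)
        have hcond : t ∈ Bset ∧ DInj (⋃ s : {s : θ.ord.ToType // s < t}, Zb s) ∧
            #(↥(⋃ s : {s : θ.ord.ToType // s < t}, Zb s)) < lam t ∧
            (∀ p ∈ ⋃ s : {s : θ.ord.ToType // s < t}, Zb s, Compat (Cpool t) p) ∧
            (∀ p ∈ ⋃ s : {s : θ.ord.ToType // s < t}, Zb s,
              ∀ p' ∈ ⋃ s : {s : θ.ord.ToType // s < t}, Zb s, p ≠ p' →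
                Compat2 (Cpool t) p p') := ⟨ht, hPD, hPcard, hPc, hPc2⟩
        have hZt : Zb t = Classical.choose (TWP (hlam_reg t) (hpool t).1 hcond.2.2.1
            hcond.2.1 hcond.2.2.2.1 hcond.2.2.2.2
            (hFutcard t) (fun Bp hBp => (hFutstr t hcond.1 Bp hBp).1)
            (fun Bp hBp => (hFutstr t hcond.1 Bp hBp).2)) := by
          rw [hZ_eq t, dif_pos hcond]
        have hspec := Classical.choose_spec (TWP (hlam_reg t) (hpool t).1 hcond.2.2.1
            hcond.2.1 hcond.2.2.2.1 hcond.2.2.2.2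
            (hFutcard t) (fun Bp hBp => (hFutstr t hcond.1 Bp hBp).1)
            (fun Bp hBp => (hFutstr t hcond.1 Bp hBp).2))
        rw [← hZt] at hspec
        obtain ⟨hsub, hcard, hdinj, hfw1, hfw2⟩ := hspec
        refine ⟨subset_trans hsub Set.diff_subset, fun x hx => (hsub hx).2,
          le_of_eq hcard, fun _ => hcard, hdinj, ?_⟩
        intro z hz s' hs'B hts'
        have hmem : Cpool s' ∈ FutS t := ⟨s', ⟨hs'B, hts'⟩, rfl⟩
        exact ⟨hfw1 z hz (Cpool s') hmem, fun u hu hne => hfw2 z hz (Cpool s') hmem u hu hne⟩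
      · -- t is not a block index
        have hZt : Zb t = ∅ := by
          rw [hZ_eq t, dif_neg (fun hc => ht hc.1)]
        refine ⟨?_, ?_, ?_, ?_, ?_, ?_⟩
        · rw [hZt]; exact Set.empty_subset _
        · rw [hZt]; intro x hx; exact absurd hx (Set.notMem_empty x)
        · rw [hZt]
          simp only [Cardinal.mk_emptyCollection]
          exact le_of_lt (lt_of_lt_of_le Cardinal.aleph0_pos (hlam_inf t))
        · intro h; exact absurd h ht
        · rw [hZt, Set.union_empty]; exact hPD
        · rw [hZt]; intro z hz; exact absurd hz (Set.notMem_empty z)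
    exact fun t => (IsWellFounded.wf (α := θ.ord.ToType) (r := (· < ·))).induction t key
  -- the final set
  refine ⟨⋃ t, Zb t, ?_, ?_, ?_⟩
  · exact Set.iUnion_subset (fun t => subset_trans (hBS t).1 (hpool_X t))
  · -- cardinality
    refine le_antisymm (mk_le_mk_of_subset
      (Set.iUnion_subset (fun t => subset_trans (hBS t).1 (hpool_X t)))) ?_
    refine le_of_forall_lt ?_
    intro c hc
    obtain ⟨t₀, hct₀⟩ := hμcof c hc
    -- find an element of Bset above t₀
    have hBub : ∃ s ∈ Bset, t₀ ≤ s := by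
      by_contra hcon
      push_neg at hcon
      have hsub : Bset ⊆ {s : θ.ord.ToType | s < t₀} := fun s hs => hcon s hs
      have := lt_of_le_of_lt (mk_le_mk_of_subset hsub) (hιseg t₀)
      rw [hBcard] at this
      exact lt_irrefl θ this
    obtain ⟨s, hsB, ht₀s⟩ := hBub
    have h1 : lam t₀ ≤ lam s := by
      rcases lt_or_eq_of_le ht₀s with h | h
      · exact le_of_lt (hlam_mono _ _ h)
      · rw [h]
    calc c ≤ μ t₀ := hct₀
    _ < lam t₀ := hμ_lt_lam t₀
    _ ≤ lam s := h1
    _ = #(Zb s) := ((hBS s).2.2.2.1 hsB).symm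
    _ ≤ #(↥(⋃ t, Zb t)) := mk_le_mk_of_subset (Set.subset_iUnion _ s)
  · -- injectivity
    intro a ha b hb c hc d hd hab hcd heq
    obtain ⟨-, ⟨sa, rfl⟩, haz⟩ := ha
    obtain ⟨-, ⟨sb, rfl⟩, hbz⟩ := hb
    obtain ⟨-, ⟨sc, rfl⟩, hcz⟩ := hc
    obtain ⟨-, ⟨sd, rfl⟩, hdz⟩ := hd
    set m := max (max sa sb) (max sc sd) with hm
    have hglob : ∀ s, s ≤ m → ∀ z ∈ Zb s,
        z ∈ (⋃ u : {u : θ.ord.ToType // u < m}, Zb u) ∪ Zb m := by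
      intro s hs z hz
      rcases lt_or_eq_of_le hs with h | h
      · exact Or.inl (Set.mem_iUnion.2 ⟨⟨s, h⟩, hz⟩)
      · exact Or.inr (h ▸ hz)
    exact (hBS m).2.2.2.2.1
      (hglob sa (le_max_of_le_left (le_max_left _ _)) a haz)
      (hglob sb (le_max_of_le_left (le_max_right _ _)) b hbz)
      (hglob sc (le_max_of_le_right (le_max_left _ _)) c hcz)
      (hglob sd (le_max_of_le_right (le_max_right _ _)) d hdz)
      hab hcd heq

lemma main_dinj {X : Set (Fin n → ℝ)} (hX : X.Infinite) : ∃ Y ⊆ X, #Y = #X ∧ DInj Y := by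
  have hinf : ℵ₀ ≤ #X := by
    haveI := hX.to_subtype
    exact Cardinal.aleph0_le_mk ↥X
  by_cases hreg : (#X).IsRegular
  · exact main_of_regular hinf hreg
  · exact main_of_singular hinf hreg


end Stmt14

/-- For every `n ≥ 1`, every infinite `X ⊆ ℝⁿ` has a subset `Y ⊆ X` with `|Y| = |X|` that is
independent for the algebraic 4-hypergraph defined by `pₙ(x,y,z,w) · qₙ(x,y,z)`. -/
theorem stmt_14 (n : ℕ) (hn : 1 ≤ n) (X : Set (Fin n → ℝ)) (hX : X.Infinite) :
    ∃ Y ⊆ X, Cardinal.mk Y = Cardinal.mk X ∧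
      IsIndependentIn (algEdges n 4 (erdosPoly n)) 4 Y := by
  obtain ⟨Y, hYX, hYcard, hYD⟩ := Stmt14.main_dinj hX
  exact ⟨Y, hYX, hYcard, Stmt14.dinj_indep hYD⟩
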